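/- arXiv:1910.09846 — 6 statements merged into one kernel-verified Lean document; each statement's English description precedes it below -/
import Mathlib

section
/- If u_n^{(ν)} ≥ 0 are nonnegative reals indexed by n, ν ≥ 1, K is a compact metrizable abelian group, ξ ∈ K has dense orbit {nξ : n ≥ 1} in K, and (i) ∑_{n≥1} u_n^{(ν)} → C ∈ ℝ₊ as ν → ∞, (ii) ∑_{n≥1} |u_n^{(ν)} − u_{n+1}^{(ν)}| → 0 as ν → ∞, then for every Borel set U ⊆ K with m_K(∂U) = 0, ∑_{n≥1} u_n^{(ν)} 1_U(x + nξ) → C·m_K(U) as ν → ∞, uniformly in x ∈ K, where m_K is normalized Haar measure. -/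
/-!
Put `b_x(n) = 1_U(x + (n + 1) ξ)`. Summation by parts shows that replacing `b_x` by its averages
over windows of length `m` changes `∑ₙ uₙ b_x(n)` by at most `2 m ∑ₙ |uₙ - uₙ₊₁|`, which tends to
`0` for fixed `m`. These window averages are Birkhoff averages of `1_U` along the rotation by `ξ`,
and they converge to `m_K(U)` uniformly in the starting point. For continuous `f` this is because
the Birkhoff averages of `f` are almost invariant under translation by `ξ` and, uniformly, under
small translations; by density of the orbit and compactness they are almost constant, and their
integral is `∫ f`. Passing to `1_U` is the portmanteau theorem: the empirical measures of orbit
segments converge weakly to `m_K`, uniformly in the starting point, and `∂U` is `m_K`-null.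
-/

open MeasureTheory Filter Topology
open scoped ENNReal BoundedContinuousFunction

section Birkhoff

variable {α β M E : Type*}

lemma Function.Semiconj.birkhoffAverage_comp (R : Type*) [DivisionSemiring R] [AddCommMonoid M]
    [Module R M] {φ : α → β} {f : α → α} {f' : β → β} (h : Function.Semiconj φ f f')
    (g : β → M) (n : ℕ) (x : α) :
    birkhoffAverage R f (g ∘ φ) n x = birkhoffAverage R f' g n (φ x) := by
  simp [birkhoffAverage, birkhoffSum, (h.iterate_right _).eq]

variable [NormedAddCommGroup E] (𝕜 : Type*) [RCLike 𝕜] [NormedSpace 𝕜 E]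

lemma dist_birkhoffAverage_iterate_apply_le {f : α → α} {g : α → E} {B : ℝ}
    (hg : ∀ x y, dist (g x) (g y) ≤ B) (n k : ℕ) (x : α) :
    dist (birkhoffAverage 𝕜 f g n (f^[k] x)) (birkhoffAverage 𝕜 f g n x) ≤ k * (B / n) := by
  rw [dist_comm]
  simpa using dist_le_range_sum_of_dist_le (f := fun i => birkhoffAverage 𝕜 f g n (f^[i] x))
    (d := fun _ => B / n) k fun {i} _ => by
      rw [dist_comm, Function.iterate_succ_apply', dist_birkhoffAverage_apply_birkhoffAverage]
      gcongr
      exact hg _ _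

lemma dist_birkhoffAverage_add_right_le [AddCommMonoid α] {g : α → E} {v : α} {δ : ℝ}
    (h : ∀ a, dist (g (a + v)) (g a) ≤ δ) (ξ : α) (n : ℕ) (a : α) :
    dist (birkhoffAverage 𝕜 (· + ξ) g n (a + v)) (birkhoffAverage 𝕜 (· + ξ) g n a) ≤ δ := by
  have hδ : 0 ≤ δ := dist_nonneg.trans (h 0)
  refine (dist_birkhoffAverage_birkhoffAverage_le 𝕜 _ g n _ _).trans
    (div_le_of_le_mul₀ n.cast_nonneg hδ ?_)
  simpa [add_right_iterate_apply, add_right_comm a v, mul_comm] using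
    Finset.sum_le_card_nsmul (Finset.range n) _ δ fun k _ => h (a + k • ξ)

lemma dist_birkhoffAverage_add_le [AddCommGroup α] {ξ : α} {V : Set α} {N : ℕ}
    (hN : ∀ z, ∃ k < N, z - k • ξ ∈ V) {g : α → E} {B δ : ℝ} (hg : ∀ x y, dist (g x) (g y) ≤ B)
    (hV : ∀ v ∈ V, ∀ a, dist (g (a + v)) (g a) ≤ δ) (n : ℕ) (x y : α) :
    dist (birkhoffAverage 𝕜 (· + ξ) g n y) (birkhoffAverage 𝕜 (· + ξ) g n x)
      ≤ δ + N * (B / n) := by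
  obtain ⟨k, hk, hkV⟩ := hN (y - x)
  have hy : y = (· + ξ)^[k] x + (y - x - k • ξ) := by rw [add_right_iterate_apply]; abel
  have hB : 0 ≤ B := dist_nonneg.trans (hg x x)
  rw [hy]
  refine (dist_triangle _ (birkhoffAverage 𝕜 (· + ξ) g n ((· + ξ)^[k] x)) _).trans
    (add_le_add (dist_birkhoffAverage_add_right_le 𝕜 (hV _ hkV) ξ n _) ?_)
  refine (dist_birkhoffAverage_iterate_apply_le 𝕜 hg n k x).trans ?_
  have : (k : ℝ) ≤ N := by exact_mod_cast hk.le
  gcongr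

end Birkhoff

section Integral

variable {α E : Type*} [MeasurableSpace α] [NormedAddCommGroup E] [NormedSpace ℝ E]
  {μ : Measure α}

lemma MeasureTheory.MeasurePreserving.integrable_birkhoffAverage {f : α → α}
    (hf : MeasurePreserving f μ μ) {g : α → E} (hg : Integrable g μ) (n : ℕ) :
    Integrable (birkhoffAverage ℝ f g n) μ :=
  (integrable_finsetSum _ fun k _ => (hf.iterate k).integrable_comp_of_integrable hg).smul _

lemma MeasureTheory.MeasurePreserving.integral_birkhoffAverage [CompleteSpace E] {f : α → α}
    (hf : MeasurePreserving f μ μ) {g : α → E} (hg : Integrable g μ) {n : ℕ} (hn : n ≠ 0) :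
    ∫ x, birkhoffAverage ℝ f g n x ∂μ = ∫ x, g x ∂μ := by
  have hk : ∀ k, ∫ x, g (f^[k] x) ∂μ = ∫ x, g x ∂μ := fun k => by
    rw [← integral_map (hf.iterate k).aemeasurable (by rw [(hf.iterate k).map_eq]; exact hg.1),
      (hf.iterate k).map_eq]
  simp only [birkhoffAverage, birkhoffSum]
  rw [integral_smul, integral_finsetSum (f := fun k x => g (f^[k] x)) _ fun k _ =>
    (hf.iterate k).integrable_comp_of_integrable hg]
  simp only [hk, Finset.sum_const, Finset.card_range]
  rw [← Nat.cast_smul_eq_nsmul ℝ, smul_smul, inv_mul_cancel₀ (Nat.cast_ne_zero.2 hn), one_smul]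

lemma dist_integral_le_of_forall_dist_le [CompleteSpace E] [IsProbabilityMeasure μ] {g : α → E}
    (hg : Integrable g μ) {c : E} {η : ℝ} (h : ∀ x, dist c (g x) ≤ η) :
    dist c (∫ x, g x ∂μ) ≤ η := by
  have hc : c - ∫ x, g x ∂μ = ∫ x, (c - g x) ∂μ := by
    rw [integral_sub (integrable_const c) hg, integral_const, probReal_univ, one_smul]
  rw [dist_eq_norm, hc]
  simpa using norm_integral_le_of_norm_le_const (μ := μ) (Eventually.of_forall fun x => by
    rw [← dist_eq_norm]; exact h x)

end Integral

section Empirical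

variable {α : Type*} [MeasurableSpace α]

noncomputable def empiricalMeasure (f : α → α) (n : ℕ) (x : α) : Measure α :=
  (n : ℝ≥0∞)⁻¹ • ∑ k ∈ Finset.range n, Measure.dirac (f^[k] x)

lemma isProbabilityMeasure_empiricalMeasure (f : α → α) {n : ℕ} (hn : n ≠ 0) (x : α) :
    IsProbabilityMeasure (empiricalMeasure f n x) := by
  constructor
  simp [empiricalMeasure, ENNReal.inv_mul_cancel (Nat.cast_ne_zero.2 hn) (ENNReal.natCast_ne_top n)]

variable [MeasurableSingletonClass α]

lemma empiricalMeasure_real_apply (f : α → α) (n : ℕ) (x : α) (s : Set α) :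
    (empiricalMeasure f n x).real s = birkhoffAverage ℝ f (s.indicator fun _ => 1) n x := by
  have hsum : (∑ k ∈ Finset.range n, Measure.dirac (f^[k] x) s).toReal
      = ∑ k ∈ Finset.range n, s.indicator (fun _ => (1 : ℝ)) (f^[k] x) := by
    rw [ENNReal.toReal_sum fun k _ => measure_ne_top _ _]
    refine Finset.sum_congr rfl fun k _ => ?_
    by_cases hk : f^[k] x ∈ s <;> simp [Measure.dirac_apply, hk]
  rw [measureReal_def, empiricalMeasure, Measure.smul_apply, Measure.finsetSum_apply,
    smul_eq_mul, ENNReal.toReal_mul, hsum]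
  simp [birkhoffAverage, birkhoffSum]

lemma integral_empiricalMeasure {E : Type*} [NormedAddCommGroup E] [NormedSpace ℝ E]
    [CompleteSpace E] (f : α → α) (n : ℕ) (x : α) (g : α → E) :
    ∫ y, g y ∂empiricalMeasure f n x = birkhoffAverage ℝ f g n x := by
  rw [empiricalMeasure, integral_smul_measure, integral_finsetSum_measure fun k _ =>
    integrable_dirac enorm_lt_top]
  simp [integral_dirac, birkhoffAverage, birkhoffSum]

end Empirical

section Rotation

lemma Continuous.eventually_forall_dist_add_lt {K β : Type*} [AddZeroClass K] [TopologicalSpace K]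
    [ContinuousAdd K] [CompactSpace K] [PseudoMetricSpace β] {f : K → β}
    (hf : Continuous f) {δ : ℝ} (hδ : 0 < δ) :
    ∀ᶠ v in 𝓝 (0 : K), ∀ a, dist (f (a + v)) (f a) < δ := by
  have hc : Continuous fun p : K × K => dist (f (p.2 + p.1)) (f p.2) := by fun_prop
  simpa using isCompact_univ.eventually_forall_of_forall_eventually fun a _ =>
    hc.continuousAt.eventually_lt continuousAt_const (by simpa using hδ)

lemma exists_forall_exists_lt_sub_nsmul_mem {K : Type*} [AddGroup K] [TopologicalSpace K]
    [IsTopologicalAddGroup K] [CompactSpace K] {ξ : K} (hξ : DenseRange (· • ξ : ℕ → K))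
    {V : Set K} (hV : V ∈ 𝓝 0) : ∃ N : ℕ, ∀ z, ∃ k < N, z - k • ξ ∈ V := by
  have hopen : ∀ k : ℕ, IsOpen ((· - k • ξ) ⁻¹' interior V) := fun k =>
    isOpen_interior.preimage (continuous_sub_right _)
  have hcover : Set.univ ⊆ ⋃ k : ℕ, (· - k • ξ) ⁻¹' interior V := fun z _ => by
    obtain ⟨k, hk⟩ := hξ.exists_mem_open (isOpen_interior.preimage (continuous_sub_left z))
      ⟨z, by simpa using mem_interior_iff_mem_nhds.2 hV⟩
    exact Set.mem_iUnion.2 ⟨k, hk⟩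
  obtain ⟨t, ht⟩ := isCompact_univ.elim_finite_subcover _ hopen hcover
  refine ⟨t.sup id + 1, fun z => ?_⟩
  obtain ⟨k, hkt, hk⟩ := Set.mem_iUnion₂.1 (ht (Set.mem_univ z))
  exact ⟨k, Nat.lt_succ_of_le (Finset.le_sup (f := id) hkt), interior_subset hk⟩

variable {K : Type*} [AddCommGroup K] [TopologicalSpace K] [IsTopologicalAddGroup K]
  [CompactSpace K] [MeasurableSpace K] [BorelSpace K] (μ : Measure K) [μ.IsAddRightInvariant]
  [IsProbabilityMeasure μ]

theorem tendstoUniformly_birkhoffAverage_add {ξ : K} (hξ : DenseRange (· • ξ : ℕ → K))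
    (f : K →ᵇ ℝ) :
    TendstoUniformly (birkhoffAverage ℝ (· + ξ) f) (fun _ => ∫ x, f x ∂μ) atTop := by
  rw [Metric.tendstoUniformly_iff]
  intro ε hε
  obtain ⟨V, hV, hfV⟩ := (f.continuous.eventually_forall_dist_add_lt (half_pos hε)).exists_mem
  obtain ⟨N, hN⟩ := exists_forall_exists_lt_sub_nsmul_mem hξ hV
  have hmp := measurePreserving_add_right μ ξ
  have hlim : Tendsto (fun n : ℕ => N * (2 * ‖f‖) / n) atTop (𝓝 0) :=
    tendsto_const_div_atTop_nhds_zero_nat _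
  filter_upwards [hlim.eventually (gt_mem_nhds (half_pos hε)), eventually_ne_atTop 0]
    with n hn hn0 y
  rw [dist_comm, ← hmp.integral_birkhoffAverage (f.integrable μ) hn0]
  refine (dist_integral_le_of_forall_dist_le (hmp.integrable_birkhoffAverage (f.integrable μ) n)
    fun x => dist_birkhoffAverage_add_le ℝ hN f.dist_le_two_norm
      (fun v hv a => (hfV v hv a).le) n x y).trans_lt ?_
  rw [mul_div_assoc']
  linarith

theorem tendstoUniformly_birkhoffAverage_indicator_add [TopologicalSpace.MetrizableSpace K]
    {ξ : K} (hξ : DenseRange (· • ξ : ℕ → K)) {U : Set K} (hU : μ (frontier U) = 0) :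
    TendstoUniformly (birkhoffAverage ℝ (· + ξ) (U.indicator fun _ => 1)) (fun _ => μ.real U)
      atTop := by
  -- segments of length `n + 1`, so that every empirical measure is a probability measure
  let ν : ℕ × K → ProbabilityMeasure K := fun p =>
    ⟨empiricalMeasure (· + ξ) (p.1 + 1) p.2,
      isProbabilityMeasure_empiricalMeasure _ p.1.succ_ne_zero _⟩
  have hν := (ProbabilityMeasure.tendsto_iff_forall_integral_tendsto (μs := ν)
      (F := atTop ×ˢ ⊤) (μ := ⟨μ, ‹_›⟩)).2 fun f => by
    have hf := (tendsto_prod_top_iff.2 (tendstoUniformly_birkhoffAverage_add μ hξ f)).comp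
      ((tendsto_add_atTop_nat 1).prodMap tendsto_id)
    simp only [ν, ProbabilityMeasure.coe_mk, integral_empiricalMeasure]
    exact hf
  have hU' := (ENNReal.tendsto_toReal (measure_ne_top μ U)).comp
    (ProbabilityMeasure.tendsto_measure_of_null_frontier_of_tendsto' hν hU)
  rw [← tendsto_prod_top_iff]
  refine (hU'.comp (Tendsto.prodMap (tendsto_sub_atTop_nat 1) tendsto_id)).congr' ?_
  filter_upwards [(eventually_ge_atTop 1).prod_inl ⊤] with p hp
  simp [ν, ← measureReal_def, empiricalMeasure_real_apply, Nat.sub_add_cancel hp,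
    Function.HasUncurry.uncurry]

end Rotation

section WeightedSums

variable {v b : ℕ → ℝ}

lemma summable_abs_sub_succ (hv : Summable v) : Summable fun n => |v n - v (n + 1)| :=
  (hv.abs.add ((summable_nat_add_iff 1).2 hv.abs)).of_nonneg_of_le (fun _ => abs_nonneg _)
    fun _ => abs_sub _ _

lemma summable_mul_of_abs_le_one (hv : Summable v) (hb : ∀ n, |b n| ≤ 1) :
    Summable fun n => v n * b n :=
  hv.abs.of_norm_bounded fun n => by
    simpa [abs_mul] using mul_le_of_le_one_right (abs_nonneg (v n)) (hb n)

lemma abs_le_tsum_abs_sub_succ (hv : Summable v) (i : ℕ) :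
    |v i| ≤ ∑' n, |v n - v (n + 1)| := by
  have hlim : Tendsto (fun j => |v i - v j|) atTop (𝓝 |v i - 0|) :=
    (tendsto_const_nhds.sub hv.tendsto_atTop_zero).abs
  rw [sub_zero] at hlim
  refine le_of_tendsto hlim ((eventually_ge_atTop i).mono fun j hij => ?_)
  calc |v i - v j| ≤ ∑ n ∈ Finset.Ico i j, |v n - v (n + 1)| := dist_le_Ico_sum_dist v hij
    _ ≤ ∑' n, |v n - v (n + 1)| :=
      (summable_abs_sub_succ hv).sum_le_tsum _ fun n _ => abs_nonneg _

lemma abs_tsum_mul_sub_tsum_mul_succ_le (hv : Summable v) (hb : ∀ n, |b n| ≤ 1) :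
    |∑' n, v n * b n - ∑' n, v n * b (n + 1)| ≤ 2 * ∑' n, |v n - v (n + 1)| := by
  have hvb := summable_mul_of_abs_le_one hv hb
  have hvb' := summable_mul_of_abs_le_one hv fun n => hb (n + 1)
  have hdiff := summable_mul_of_abs_le_one (((summable_nat_add_iff 1).2 hv).sub hv)
    fun n => hb (n + 1)
  have hsplit : ∑' n, v n * b n - ∑' n, v n * b (n + 1)
      = v 0 * b 0 + ∑' n, (v (n + 1) - v n) * b (n + 1) := by
    rw [hvb.tsum_eq_zero_add, add_sub_assoc, ← ((summable_nat_add_iff 1).2 hvb).tsum_sub hvb']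
    simp only [sub_mul]
  have hhead : |v 0 * b 0| ≤ ∑' n, |v n - v (n + 1)| := by
    rw [abs_mul]
    exact (mul_le_of_le_one_right (abs_nonneg _) (hb 0)).trans (abs_le_tsum_abs_sub_succ hv 0)
  have htail : |∑' n, (v (n + 1) - v n) * b (n + 1)| ≤ ∑' n, |v n - v (n + 1)| := by
    refine (norm_tsum_le_tsum_norm hdiff.norm).trans
      ((hdiff.norm).tsum_le_tsum (fun n => ?_) (summable_abs_sub_succ hv))
    rw [Real.norm_eq_abs, abs_mul, abs_sub_comm]
    exact mul_le_of_le_one_right (abs_nonneg _) (hb _)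
  rw [hsplit, two_mul]
  exact (abs_add_le _ _).trans (add_le_add hhead htail)

lemma abs_tsum_mul_sub_tsum_mul_add_le (hv : Summable v) (hb : ∀ n, |b n| ≤ 1) (j : ℕ) :
    |∑' n, v n * b n - ∑' n, v n * b (n + j)| ≤ 2 * j * ∑' n, |v n - v (n + 1)| := by
  induction j with
  | zero => simp
  | succ j ih =>
    have hstep := abs_tsum_mul_sub_tsum_mul_succ_le hv (b := fun n => b (n + j)) fun n => hb _
    simp only [add_right_comm _ 1 j, add_assoc] at hstep
    calc _ ≤ |∑' n, v n * b n - ∑' n, v n * b (n + j)|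
          + |∑' n, v n * b (n + j) - ∑' n, v n * b (n + (j + 1))| := abs_sub_le _ _ _
      _ ≤ _ := by push_cast; linarith

lemma birkhoffAverage_add_one_apply (m n : ℕ) :
    birkhoffAverage ℝ (· + 1) b m n = (m : ℝ)⁻¹ * ∑ k ∈ Finset.range m, b (n + k) := by
  simp [birkhoffAverage, birkhoffSum]

lemma abs_tsum_mul_sub_tsum_mul_birkhoffAverage_le (hv : Summable v) (hb : ∀ n, |b n| ≤ 1)
    {m : ℕ} (hm : m ≠ 0) :
    |∑' n, v n * b n - ∑' n, v n * birkhoffAverage ℝ (· + 1) b m n|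
      ≤ 2 * m * ∑' n, |v n - v (n + 1)| := by
  set S := ∑' n, v n * b n
  set T := fun k => ∑' n, v n * b (n + k)
  have hswap : ∑' n, v n * birkhoffAverage ℝ (· + 1) b m n
      = (m : ℝ)⁻¹ * ∑ k ∈ Finset.range m, T k := by
    rw [← Summable.tsum_finsetSum fun k _ => summable_mul_of_abs_le_one hv fun n => hb (n + k),
      ← tsum_mul_left]
    congr 1 with n
    rw [birkhoffAverage_add_one_apply, mul_left_comm, Finset.mul_sum]
  have hcenter : S - (m : ℝ)⁻¹ * ∑ k ∈ Finset.range m, T k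
      = (m : ℝ)⁻¹ * ∑ k ∈ Finset.range m, (S - T k) := by
    rw [Finset.sum_sub_distrib, Finset.sum_const, Finset.card_range, nsmul_eq_mul]
    field_simp
  rw [hswap, hcenter, abs_mul, abs_inv, Nat.abs_cast]
  calc (m : ℝ)⁻¹ * |∑ k ∈ Finset.range m, (S - T k)|
      ≤ (m : ℝ)⁻¹ * ∑ _k ∈ Finset.range m, 2 * m * ∑' n, |v n - v (n + 1)| := by
        gcongr
        refine (Finset.abs_sum_le_sum_abs _ _).trans (Finset.sum_le_sum fun k hk => ?_)
        refine (abs_tsum_mul_sub_tsum_mul_add_le hv hb k).trans ?_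
        have : (k : ℝ) ≤ m := by exact_mod_cast (Finset.mem_range.1 hk).le
        have : 0 ≤ ∑' n, |v n - v (n + 1)| := tsum_nonneg fun _ => abs_nonneg _
        gcongr
    _ = 2 * m * ∑' n, |v n - v (n + 1)| := by
      rw [Finset.sum_const, Finset.card_range, nsmul_eq_mul]
      field_simp

lemma abs_tsum_mul_sub_mul_tsum_le_of_abs_sub_le (hv0 : ∀ n, 0 ≤ v n) (hv : Summable v)
    {A : ℕ → ℝ} {q δ : ℝ} (hA : ∀ n, |A n - q| ≤ δ) :
    |∑' n, v n * A n - q * ∑' n, v n| ≤ δ * ∑' n, v n := by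
  have hbound : ∀ n, ‖v n * (A n - q)‖ ≤ δ * v n := fun n => by
    rw [Real.norm_eq_abs, abs_mul, abs_of_nonneg (hv0 n), mul_comm]
    exact mul_le_mul_of_nonneg_right (hA n) (hv0 n)
  have hs : Summable fun n => v n * (A n - q) := (hv.mul_left δ).of_norm_bounded hbound
  have hsplit : ∑' n, v n * A n = ∑' n, v n * (A n - q) + q * ∑' n, v n := by
    rw [← tsum_mul_left, ← hs.tsum_add (hv.mul_left q)]
    congr 1 with n
    ring
  rw [hsplit, add_sub_cancel_right]
  exact tsum_of_norm_bounded (hv.hasSum.mul_left δ) hbound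

theorem abs_tsum_mul_sub_mul_tsum_le (hv0 : ∀ n, 0 ≤ v n) (hv : Summable v)
    (hb : ∀ n, |b n| ≤ 1) {m : ℕ} (hm : m ≠ 0) {q δ : ℝ}
    (hA : ∀ n, |birkhoffAverage ℝ (· + 1) b m n - q| ≤ δ) :
    |∑' n, v n * b n - q * ∑' n, v n|
      ≤ 2 * m * ∑' n, |v n - v (n + 1)| + δ * ∑' n, v n :=
  (abs_sub_le _ (∑' n, v n * birkhoffAverage ℝ (· + 1) b m n) _).trans <|
    add_le_add (abs_tsum_mul_sub_tsum_mul_birkhoffAverage_le hv hb hm)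
      (abs_tsum_mul_sub_mul_tsum_le_of_abs_sub_le hv0 hv hA)

end WeightedSums

lemma abs_tsum_mul_indicator_add_nsmul_sub_le {K : Type*} [AddMonoid K] {ξ : K} {U : Set K}
    {v : ℕ → ℝ} (hv0 : ∀ n, 0 ≤ v n) (hv : Summable v) {m : ℕ} (hm : m ≠ 0) {q δ : ℝ}
    (hA : ∀ y, |birkhoffAverage ℝ (· + ξ) (U.indicator fun _ => 1) m y - q| ≤ δ) (x : K) :
    |∑' n, v n * U.indicator (fun _ => (1 : ℝ)) (x + (n + 1) • ξ) - q * ∑' n, v n|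
      ≤ 2 * m * ∑' n, |v n - v (n + 1)| + δ * ∑' n, v n := by
  have hφ : Function.Semiconj (fun n : ℕ => x + (n + 1) • ξ) (· + 1) (· + ξ) := fun n => by
    show x + (n + 1 + 1) • ξ = x + (n + 1) • ξ + ξ
    rw [add_assoc x, ← succ_nsmul]
  refine abs_tsum_mul_sub_mul_tsum_le hv0 hv (fun n => ?_) hm fun n => ?_
  · by_cases h : x + (n + 1) • ξ ∈ U <;> simp [h]
  · rw [← Function.comp_def (U.indicator _), hφ.birkhoffAverage_comp ℝ]
    exact hA _

theorem equidistribution_lemma_general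
    {K : Type*} [AddCommGroup K] [TopologicalSpace K] [IsTopologicalAddGroup K]
    [CompactSpace K] [TopologicalSpace.MetrizableSpace K]
    [MeasurableSpace K] [BorelSpace K]
    (μ : Measure K) [μ.IsAddHaarMeasure] [IsProbabilityMeasure μ]
    (ξ : K) (hξ : Dense (Set.range fun n : ℕ => (n + 1) • ξ))
    (u : ℕ → ℕ → ℝ) (hu : ∀ ν n, 0 ≤ u ν n)
    (hsum : ∀ ν, Summable (u ν))
    (C : ℝ)
    (h1 : Tendsto (fun ν => ∑' n, u ν n) atTop (𝓝 C))
    (h2 : Tendsto (fun ν => ∑' n, |u ν n - u ν (n + 1)|) atTop (𝓝 0))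
    (U : Set K) (hbd : μ (frontier U) = 0) :
    TendstoUniformly
      (fun ν x => ∑' n, u ν n * Set.indicator U (fun _ => (1 : ℝ)) (x + (n + 1) • ξ))
      (fun _ => C * (μ U).toReal) atTop := by
  have hξ' : DenseRange (· • ξ : ℕ → K) := hξ.mono (Set.range_comp_subset_range (· + 1) (· • ξ))
  rw [Metric.tendstoUniformly_iff]
  intro ε hε
  obtain ⟨δ, hδ, hCδ⟩ := exists_pos_mul_lt hε C
  obtain ⟨m, hm, hm0⟩ := ((Metric.tendstoUniformly_iff.1
    (tendstoUniformly_birkhoffAverage_indicator_add μ hξ' hbd) δ hδ).and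
    (eventually_ne_atTop 0)).exists
  have hbound : Tendsto (fun ν => 2 * (m : ℝ) * ∑' n, |u ν n - u ν (n + 1)| + δ * ∑' n, u ν n
      + |∑' n, u ν n - C|) atTop (𝓝 (C * δ)) := by
    simpa [Real.norm_eq_abs, mul_comm δ] using
      ((h2.const_mul (2 * (m : ℝ))).add (h1.const_mul δ)).add (h1.sub_const C).norm
  filter_upwards [hbound.eventually (gt_mem_nhds hCδ)] with ν hν x
  rw [dist_comm, Real.dist_eq, ← measureReal_def]
  have key := abs_tsum_mul_indicator_add_nsmul_sub_le (hu ν) (hsum ν) hm0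
    (fun y => by rw [abs_sub_comm, ← Real.dist_eq]; exact (hm y).le) x
  have hU : |μ.real U * ∑' n, u ν n - C * μ.real U| ≤ |∑' n, u ν n - C| := by
    rw [mul_comm C, ← mul_sub, abs_mul, abs_of_nonneg measureReal_nonneg]
    exact mul_le_of_le_one_left (abs_nonneg _) measureReal_le_one
  calc _ ≤ _ := abs_sub_le _ (μ.real U * ∑' n, u ν n) _
    _ < ε := by linarith

/-- Equidistribution Lemma: for a compact metrizable abelian group `K` with
normalized Haar measure `μ`, an element `ξ` whose forward orbit `{nξ : n ≥ 1}` is dense,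
and nonnegative weights `u ν n` (representing `u_{n+1}^{(ν)}`) with
`∑_n u ν n → C` and `∑_n |u ν n − u ν (n+1)| → 0`, one has
`∑_n u ν n · 1_U(x + (n+1)ξ) → C · μ(U)` uniformly in `x`, for every Borel `U`
with null boundary. -/
theorem equidistribution_lemma
    {K : Type*} [AddCommGroup K] [TopologicalSpace K] [IsTopologicalAddGroup K]
    [CompactSpace K] [TopologicalSpace.MetrizableSpace K]
    [MeasurableSpace K] [BorelSpace K]
    (μ : Measure K) [μ.IsAddHaarMeasure] [IsProbabilityMeasure μ]
    (ξ : K) (hξ : Dense (Set.range fun n : ℕ => (n + 1) • ξ))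
    (u : ℕ → ℕ → ℝ) (hu : ∀ ν n, 0 ≤ u ν n)
    (hsum : ∀ ν, Summable (u ν))
    (hdiff : ∀ ν, Summable fun n => |u ν n - u ν (n + 1)|)
    (C : ℝ) (hC : 0 ≤ C)
    (h1 : Tendsto (fun ν => ∑' n, u ν n) atTop (𝓝 C))
    (h2 : Tendsto (fun ν => ∑' n, |u ν n - u ν (n + 1)|) atTop (𝓝 0))
    (U : Set K) (hU : MeasurableSet U) (hbd : μ (frontier U) = 0) :
    TendstoUniformly
      (fun ν x => ∑' n, u ν n * Set.indicator U (fun _ => (1 : ℝ)) (x + (n + 1) • ξ))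
      (fun _ => C * (μ U).toReal) atTop :=
  equidistribution_lemma_general μ ξ hξ u hu hsum C h1 h2 U hbd
end

section
/- Let a : ℝ₊ → ℝ₊ be continuous, strictly increasing, and regularly varying of index γ ∈ (0,1), with inverse a⁻¹. If a⁻¹ satisfies a⁻¹(n+1) − a⁻¹(n) ∼ a⁻¹(n)/(γn) as n → ∞, then for any fixed 0 < c < d < ∞ and with x_{k,n} := n / a⁻¹(k), one has 1/a⁻¹(k) ∼ (γ a(n)/n) · (x_{k,n} − x_{k+1,n}) / x_{k,n}^γ as k, n → ∞ with x_{k,n} ∈ [c,d]. -/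
open Filter Topology

lemma close_ratio {u v w ε : ℝ} (hε : 0 < ε)
    (hu : |u - 1| < min (ε/15) (1/4)) (hv : |v - 1| < min (ε/15) (1/4))
    (hw : |w - 1| < min (ε/15) (1/4)) :
    |v / (u * w) - 1| < ε := by
  set η := min (ε/15) (1/4) with hηdef
  have hηε : η ≤ ε/15 := min_le_left _ _
  have hη4 : η ≤ 1/4 := min_le_right _ _
  have hη0 : 0 < η := lt_min (by linarith) (by norm_num)
  obtain ⟨hu1, hu2⟩ := abs_lt.1 hu
  obtain ⟨hv1, hv2⟩ := abs_lt.1 hv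
  obtain ⟨hw1, hw2⟩ := abs_lt.1 hw
  have hu0 : 1/2 < u := by linarith
  have hw0 : 1/2 < w := by linarith
  have huw : 0 < u * w := by nlinarith
  have hlb : (1-η)*(1-η) < u * w := by nlinarith
  have hub : u * w < (1+η)*(1+η) := by nlinarith
  rw [abs_lt]
  constructor
  · have h1 : (1 - ε) * (u * w) < v := by
      rcases le_or_gt 1 ε with h | h
      · nlinarith
      · have h15 : 15 * η < 1 := by linarith
        have step : (1 - ε) * (u * w) ≤ (1 - 15*η) * (u * w) :=
          mul_le_mul_of_nonneg_right (by linarith) huw.le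
        have step2 : (1 - 15*η) * (u * w) < (1 - 15*η) * ((1+η)*(1+η)) :=
          mul_lt_mul_of_pos_left hub (by linarith)
        have final : (1 - 15*η) * ((1+η)*(1+η)) < 1 - η := by nlinarith [mul_pos hη0 hη0, mul_pos (mul_pos hη0 hη0) hη0]
        linarith
    have := (lt_div_iff₀ huw).2 h1
    linarith
  · have h2 : v < (1 + ε) * (u * w) := by
      have step : (1 + 15*η) * ((1-η)*(1-η)) < (1 + 15*η) * (u * w) :=
        mul_lt_mul_of_pos_left hlb (by linarith)
      have step2 : (1 + 15*η) * (u * w) ≤ (1 + ε) * (u * w) :=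
        mul_le_mul_of_nonneg_right (by linarith) huw.le
      have final : 1 + η < (1 + 15*η) * ((1-η)*(1-η)) := by nlinarith [mul_pos hη0 hη0, mul_pos (mul_pos hη0 hη0) hη0]
      linarith
    have := (div_lt_iff₀ huw).2 h2
    linarith

lemma uct (a : ℝ → ℝ) (γ c d : ℝ) (hγ0 : 0 < γ) (hc : 0 < c) (hcd : c ≤ d)
    (hmono : StrictMonoOn a (Set.Ici 0)) (hapos : ∀ x > 0, 0 < a x)
    (hRV : ∀ l > 0, Tendsto (fun t => a (l * t) / a t) atTop (𝓝 (l ^ γ)))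
    (ε : ℝ) (hε : 0 < ε) :
    ∃ T : ℝ, 0 < T ∧ ∀ t ≥ T, ∀ x, c ≤ x → x ≤ d → |a (x * t) / a t - x ^ γ| < ε := by
  have hcont : ContinuousOn (fun x : ℝ => x ^ γ) (Set.Icc c d) := fun x _ =>
    (Real.continuousAt_rpow_const x γ (Or.inr hγ0.le)).continuousWithinAt
  have huc := isCompact_Icc.uniformContinuousOn_of_continuous hcont
  rw [Metric.uniformContinuousOn_iff] at huc
  obtain ⟨δ, hδ0, hδ⟩ := huc (ε/3) (by linarith)
  set s := δ/2 with hsdef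
  have hs0 : 0 < s := by positivity
  set M := ⌈(d - c)/s⌉₊ with hMdef
  set g : ℕ → ℝ := fun j => min (c + j * s) d with hgdef
  have hgmem : ∀ j, g j ∈ Set.Icc c d := fun j =>
    ⟨le_min (le_add_of_nonneg_right (mul_nonneg (Nat.cast_nonneg j) hs0.le)) hcd, min_le_right _ _⟩
  have hgpos : ∀ j, 0 < g j := fun j => lt_of_lt_of_le hc (hgmem j).1
  have hev : ∀ᶠ t in atTop, ∀ j ∈ Finset.range (M+2), |a (g j * t)/a t - (g j)^γ| < ε/3 := by
    rw [eventually_all_finset]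
    intro j _
    have h1 := Metric.tendsto_nhds.1 (hRV (g j) (hgpos j)) (ε/3) (by linarith)
    simpa [Real.dist_eq] using h1
  obtain ⟨T, hT⟩ := eventually_atTop.1 (hev.and (eventually_gt_atTop 0))
  refine ⟨max T 1, lt_of_lt_of_le one_pos (le_max_right _ _), ?_⟩
  intro t ht x hcx hxd
  obtain ⟨hgrid, ht0⟩ := hT t (le_trans (le_max_left _ _) ht)
  set i := ⌊(x - c)/s⌋₊ with hidef
  have hxc : 0 ≤ (x - c)/s := div_nonneg (by linarith) hs0.le
  have hiM : i ≤ M := le_trans (Nat.floor_le_floor (by gcongr)) (Nat.floor_le_ceil _)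
  have h1 : (i:ℝ) * s ≤ x - c := (le_div_iff₀ hs0).1 (Nat.floor_le hxc)
  have h2 : x - c < ((i:ℝ)+1) * s := (div_lt_iff₀ hs0).1 (Nat.lt_floor_add_one _)
  have hgi_le : g i ≤ x := min_le_of_left_le (by linarith)
  have hx_le : x ≤ g (i+1) := le_min (by push_cast; linarith) hxd
  have hgi_lb : x - s < g i := lt_min (by linarith) (by linarith)
  have hgi1_ub : g (i+1) ≤ x + s := le_trans (min_le_left _ _) (by push_cast; linarith)
  have hxmem : x ∈ Set.Icc c d := ⟨hcx, hxd⟩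
  have e1 := hδ (g i) (hgmem i) x hxmem (by
    rw [Real.dist_eq, abs_lt]; constructor <;> [linarith; linarith])
  have e2 := hδ (g (i+1)) (hgmem (i+1)) x hxmem (by
    rw [Real.dist_eq, abs_lt]; constructor <;> [linarith; linarith])
  rw [Real.dist_eq] at e1 e2
  have hat : 0 < a t := hapos t ht0
  have hx0 : 0 ≤ x := le_trans hc.le hcx
  have hmlo : a (g i * t) ≤ a (x * t) :=
    hmono.monotoneOn (Set.mem_Ici.2 (mul_nonneg (hgpos i).le ht0.le))
      (Set.mem_Ici.2 (mul_nonneg hx0 ht0.le))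
      (mul_le_mul_of_nonneg_right hgi_le ht0.le)
  have hmhi : a (x * t) ≤ a (g (i+1) * t) :=
    hmono.monotoneOn (Set.mem_Ici.2 (mul_nonneg hx0 ht0.le))
      (Set.mem_Ici.2 (mul_nonneg (hgpos (i+1)).le ht0.le))
      (mul_le_mul_of_nonneg_right hx_le ht0.le)
  have s1 : a (g i * t)/a t ≤ a (x*t)/a t := by gcongr
  have s2 : a (x*t)/a t ≤ a (g (i+1) * t)/a t := by gcongr
  have f1 := abs_lt.1 (hgrid i (Finset.mem_range.2 (by omega)))
  have f2 := abs_lt.1 (hgrid (i+1) (Finset.mem_range.2 (by omega)))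
  have e1' := abs_lt.1 e1
  have e2' := abs_lt.1 e2
  rw [abs_lt]
  constructor
  · linarith [f1.1, e1'.2, s1]
  · linarith [f2.2, e2'.1, s2]


/-- Let `a : ℝ → ℝ` be continuous, strictly increasing on `[0,∞)`, regularly varying
of index `γ ∈ (0,1)`, with inverse `b = a⁻¹`. If `b(n+1) − b(n) ∼ b(n)/(γn)`, then for
fixed `0 < c < d`, with `x_{k,n} := n / b(k)`, one has
`1/b(k) ∼ (γ a(n)/n) · (x_{k,n} − x_{k+1,n}) / x_{k,n}^γ` as `k, n → ∞` with
`x_{k,n} ∈ [c,d]`. -/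
theorem inverse_asymptotics_of_regvar
    (a b : ℝ → ℝ) (γ : ℝ) (hγ0 : 0 < γ) (hγ1 : γ < 1)
    (hcont : Continuous a) (hmono : StrictMonoOn a (Set.Ici 0))
    (hapos : ∀ x > 0, 0 < a x)
    (hbpos : ∀ y > 0, 0 < b y)
    (hba : ∀ x ≥ 0, b (a x) = x) (hab : ∀ y > 0, a (b y) = y)
    (hbtop : Tendsto b atTop atTop)
    (hRV : ∀ l > 0, Tendsto (fun t => a (l * t) / a t) atTop (𝓝 (l ^ γ)))
    (hΔ : Tendsto (fun n : ℕ => (b (n + 1) - b n) / (b n / (γ * n))) atTop (𝓝 1))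
    (c d : ℝ) (hc : 0 < c) (hcd : c < d) :
    ∀ ε > 0, ∃ N : ℕ, ∀ k n : ℕ, N ≤ k → N ≤ n →
      c ≤ (n : ℝ) / b k → (n : ℝ) / b k ≤ d →
      |(1 / b k) /
          ((γ * a n / n) * (((n : ℝ) / b k - (n : ℝ) / b (k + 1)) / ((n : ℝ) / b k) ^ γ))
        - 1| < ε := by
  intro ε hε
  set η := min (ε/15) (1/4) with hηdef
  have hη4 : η ≤ 1/4 := min_le_right _ _
  have hη0 : 0 < η := lt_min (by linarith) (by norm_num)
  -- N1 : control of u k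
  obtain ⟨N1, hN1⟩ := Metric.tendsto_atTop.1 hΔ η hη0
  -- v = b(k+1)/b k tends to 1
  have hV : Tendsto (fun k : ℕ => b (k+1) / b k) atTop (𝓝 1) := by
    have hden : Tendsto (fun k : ℕ => γ * (k:ℝ)) atTop atTop :=
      Tendsto.const_mul_atTop hγ0 tendsto_natCast_atTop_atTop
    have hinv : Tendsto (fun k : ℕ => (γ * (k:ℝ))⁻¹) atTop (𝓝 0) := hden.inv_tendsto_atTop
    have hprod : Tendsto (fun k : ℕ =>
        1 + ((b (k + 1) - b k) / (b k / (γ * k))) * (γ * (k:ℝ))⁻¹) atTop (𝓝 1) := by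
      have := hΔ.mul hinv
      rw [mul_zero] at this
      simpa using tendsto_const_nhds.add this
    refine hprod.congr' ?_
    filter_upwards [eventually_ge_atTop 1] with k hk
    have hk0 : (0:ℝ) < (k:ℝ) := by exact_mod_cast Nat.pos_of_ne_zero (by omega)
    have hbk : 0 < b k := hbpos _ hk0
    have hγk : γ * (k:ℝ) ≠ 0 := by positivity
    field_simp
    ring
  obtain ⟨N2, hN2⟩ := Metric.tendsto_atTop.1 hV η hη0
  -- uniform control of w
  have hcγ : (0:ℝ) < c ^ γ := Real.rpow_pos_of_pos hc γ
  obtain ⟨T, hT0, hTT⟩ := uct a γ c d hγ0 hc hcd.le hmono hapos hRV (η * c ^ γ) (by positivity)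
  obtain ⟨N3, hN3⟩ := eventually_atTop.1 ((hbtop.comp tendsto_natCast_atTop_atTop).eventually_ge_atTop T)
  refine ⟨max (max N1 N2) (max N3 1), ?_⟩
  intro k n hk hn hcx hxd
  have hk1 : 1 ≤ k := le_trans (le_trans (le_max_right _ _) (le_max_right _ _)) hk
  have hkN1 : N1 ≤ k := le_trans (le_trans (le_max_left _ _) (le_max_left _ _)) hk
  have hkN2 : N2 ≤ k := le_trans (le_trans (le_max_right _ _) (le_max_left _ _)) hk
  have hkN3 : N3 ≤ k := le_trans (le_trans (le_max_left _ _) (le_max_right _ _)) hk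
  have hk0 : (0:ℝ) < (k:ℝ) := by exact_mod_cast hk1
  have hbk : 0 < b k := hbpos _ hk0
  have hbk1 : 0 < b ((k:ℝ) + 1) := hbpos _ (by linarith)
  have hn0 : (0:ℝ) < (n:ℝ) := lt_of_lt_of_le (mul_pos hc hbk) ((le_div_iff₀ hbk).1 hcx)
  have han : 0 < a n := hapos _ hn0
  have hkak : a (b k) = (k:ℝ) := hab _ hk0
  set X := ((n:ℝ) / b k) ^ γ with hXdef
  have hX : 0 < X := Real.rpow_pos_of_pos (div_pos hn0 hbk) γ
  -- u
  set u := (b ((k:ℝ) + 1) - b k) / (b k / (γ * k)) with hudef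
  have hu : |u - 1| < η := by
    have := hN1 k hkN1
    rwa [Real.dist_eq] at this
  have hu34 : 3/4 < u := by have := (abs_lt.1 hu).1; linarith
  have hγk : 0 < γ * (k:ℝ) := by positivity
  have hΔpos : 0 < b ((k:ℝ) + 1) - b k := by
    have : b ((k:ℝ) + 1) - b k = u * (b k / (γ * k)) := by
      rw [hudef]; field_simp
    rw [this]; positivity
  -- v
  have hv : |b ((k:ℝ) + 1) / b k - 1| < η := by
    have := hN2 k hkN2
    rwa [Real.dist_eq] at this
  -- w
  have hbkT : T ≤ b k := hN3 k hkN3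
  have hw0 := hTT (b k) hbkT ((n:ℝ) / b k) hcx hxd
  rw [div_mul_cancel₀ _ hbk.ne', hkak] at hw0
  have hXc : c ^ γ ≤ X := Real.rpow_le_rpow hc.le hcx hγ0.le
  have hw : |a n / ((k:ℝ) * X) - 1| < η := by
    have heq : a n / ((k:ℝ) * X) - 1 = (a n / (k:ℝ) - X) / X := by
      field_simp
    rw [heq, abs_div, abs_of_pos hX, div_lt_iff₀ hX]
    calc |a n / (k:ℝ) - X| < η * c ^ γ := hw0
      _ ≤ η * X := by nlinarith
  -- the key algebraic identity
  have key : (1 / b k) /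
      ((γ * a n / n) * (((n : ℝ) / b k - (n : ℝ) / b ((k:ℝ) + 1)) / X))
      = (b ((k:ℝ) + 1) / b k) / (u * (a n / ((k:ℝ) * X))) := by
    rw [hudef]
    have hdiff : (n : ℝ) / b k - (n : ℝ) / b ((k:ℝ) + 1)
        = (n:ℝ) * (b ((k:ℝ) + 1) - b k) / (b k * b ((k:ℝ) + 1)) := by
      field_simp
    rw [hdiff]
    field_simp
  rw [key]
  exact close_ratio hε hu hv hw
end

section
/- Let a : ℝ₊ → ℝ₊ be continuous, strictly increasing, and regularly varying of index γ ∈ (0,1). Then for any fixed 0 < c < d < ∞ and with x_{k,n} := n / a⁻¹(k), one has k ∼ a(n)/x_{k,n}^γ as k, n → ∞ with x_{k,n} ∈ [c,d]. -/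
open Filter Topology

set_option maxHeartbeats 1000000

private lemma key_unif (a : ℝ → ℝ) (γ : ℝ) (hγ0 : 0 < γ)
    (hmono : StrictMonoOn a (Set.Ici 0))
    (hapos : ∀ x > 0, 0 < a x)
    (hRV : ∀ l > 0, Tendsto (fun t => a (l * t) / a t) atTop (𝓝 (l ^ γ)))
    (c d : ℝ) (hc : 0 < c) (hcd : c < d)
    (ε : ℝ) (hε : 0 < ε) (hε1 : ε ≤ 1) :
    ∃ T : ℝ, 1 ≤ T ∧ ∀ t, T ≤ t → ∀ x, c ≤ x → x ≤ d →
      |a t * x ^ γ / a (x * t) - 1| < ε := by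
  set δ : ℝ := ε / 4 with hδdef
  have hδ : 0 < δ := by positivity
  have hδ4 : δ ≤ 1/4 := by simp only [hδdef]; linarith
  set r : ℝ := (1 + δ) ^ γ⁻¹ with hrdef
  have hr0 : 0 < r := by positivity
  have hr1 : 1 < r := by
    rw [hrdef]
    rw [Real.one_lt_rpow_iff_of_pos (by linarith)]
    left; constructor <;> [linarith; positivity]
  have hrγ : r ^ γ = 1 + δ := by
    rw [hrdef, ← Real.rpow_mul (by linarith), inv_mul_cancel₀ hγ0.ne', Real.rpow_one]
  set xi : ℕ → ℝ := fun i => c * r ^ (i : ℝ) with hxidef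
  have hxipos : ∀ i, 0 < xi i := fun i => by
    simp only [hxidef]; positivity
  have hxisucc : ∀ i : ℕ, xi (i + 1) = xi i * r := by
    intro i
    simp only [hxidef]
    push_cast
    rw [Real.rpow_add hr0, Real.rpow_one, mul_assoc]
  set m : ℕ := ⌊Real.logb r (d / c)⌋₊ with hmdef
  -- eventual bounds for the finitely many grid points
  have hev : ∀ᶠ t in atTop, (1 ≤ t ∧
      ∀ i ∈ Finset.range (m + 2), |a (xi i * t) / a t - (xi i) ^ γ| < δ * (xi i) ^ γ) := by
    refine (eventually_ge_atTop 1).and ?_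
    rw [Filter.eventually_all_finset]
    intro i _
    have h := hRV (xi i) (hxipos i)
    have hpos : 0 < δ * (xi i) ^ γ := by
      have := hxipos i; positivity
    exact (Metric.tendsto_nhds.mp h _ hpos).mono (by
      intro t ht
      simpa [Real.dist_eq] using ht)
  obtain ⟨T, hT⟩ := Filter.eventually_atTop.mp hev
  refine ⟨max T 1, le_max_right _ _, ?_⟩
  intro t ht x hcx hxd
  obtain ⟨ht1, hall⟩ := hT t (le_trans (le_max_left _ _) ht)
  have ht0 : 0 < t := lt_of_lt_of_le one_pos ht1
  have hxpos : 0 < x := lt_of_lt_of_le hc hcx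
  -- choose the grid index
  set i : ℕ := ⌊Real.logb r (x / c)⌋₊ with hidef
  have hlog_nonneg : 0 ≤ Real.logb r (x / c) :=
    Real.logb_nonneg hr1 ((one_le_div hc).mpr hcx)
  have hi_le : (i : ℝ) ≤ Real.logb r (x / c) := Nat.floor_le hlog_nonneg
  have hi_lt : Real.logb r (x / c) < i + 1 := Nat.lt_floor_add_one _
  have him : i + 1 < m + 2 := by
    have h1 : Real.logb r (x / c) ≤ Real.logb r (d / c) :=
      Real.logb_le_logb_of_le hr1 (by positivity) (by gcongr)
    have : i ≤ m := Nat.floor_le_floor h1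
    omega
  have him' : i < m + 2 := by omega
  have hrlogb : r ^ Real.logb r (x / c) = x / c :=
    Real.rpow_logb hr0 (ne_of_gt hr1) (by positivity)
  have hx1 : xi i ≤ x := by
    have : r ^ (i : ℝ) ≤ x / c := by
      rw [← hrlogb]
      exact Real.rpow_le_rpow_left_iff hr1 |>.mpr hi_le
    calc xi i = c * r ^ (i : ℝ) := rfl
    _ ≤ c * (x / c) := by nlinarith
    _ = x := by field_simp
  have hx2 : x ≤ xi (i + 1) := by
    have : x / c ≤ r ^ ((i : ℝ) + 1) := by
      rw [← hrlogb]
      exact Real.rpow_le_rpow_left_iff hr1 |>.mpr hi_lt.le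
    have h2 : xi (i + 1) = c * r ^ ((i : ℝ) + 1) := by
      simp only [hxidef]; push_cast; ring_nf
    rw [h2]
    calc x = c * (x / c) := by field_simp
    _ ≤ c * r ^ ((i : ℝ) + 1) := by nlinarith
  -- now the estimate
  have hA : 0 < a t := hapos t ht0
  have hu : 0 < a (xi i * t) := hapos _ (by have := hxipos i; positivity)
  have hv : 0 < a (xi (i + 1) * t) := hapos _ (by have := hxipos (i + 1); positivity)
  have hB : 0 < a (x * t) := hapos _ (by positivity)
  have huB : a (xi i * t) ≤ a (x * t) :=
    hmono.monotoneOn (by have := hxipos i; simp [Set.mem_Ici]; positivity)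
      (by simp [Set.mem_Ici]; positivity)
      (mul_le_mul_of_nonneg_right hx1 ht0.le)
  have hBv : a (x * t) ≤ a (xi (i + 1) * t) :=
    hmono.monotoneOn (by simp [Set.mem_Ici]; positivity)
      (by have := hxipos (i + 1); simp [Set.mem_Ici]; positivity)
      (mul_le_mul_of_nonneg_right hx2 ht0.le)
  set P : ℝ := xi i ^ γ with hPdef
  have hP : 0 < P := Real.rpow_pos_of_pos (hxipos i) γ
  have hratio : xi (i + 1) ^ γ = P * (1 + δ) := by
    rw [hxisucc, Real.mul_rpow (hxipos i).le hr0.le, hrγ, hPdef]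
  have h1 := hall i (Finset.mem_range.mpr him')
  have h2 := hall (i + 1) (Finset.mem_range.mpr him)
  rw [abs_lt] at h1 h2
  have hlow : (1 - δ) * P < a (xi i * t) / a t := by
    rw [← hPdef] at h1; linarith [h1.1]
  have hhigh : a (xi (i + 1) * t) / a t < (1 + δ) * (P * (1 + δ)) := by
    rw [hratio] at h2; linarith [h2.2]
  set q : ℝ := a (x * t) / a t with hqdef
  have hq : 0 < q := by positivity
  have hq1 : (1 - δ) * P < q := by
    refine lt_of_lt_of_le hlow ?_
    exact div_le_div_of_nonneg_right huB hA.le -- maybe wrong name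
  have hq2 : q < (1 + δ) * (P * (1 + δ)) := by
    refine lt_of_le_of_lt ?_ hhigh
    exact div_le_div_of_nonneg_right hBv hA.le -- maybe wrong name
  have hxγ1 : P ≤ x ^ γ := Real.rpow_le_rpow (hxipos i).le hx1 hγ0.le
  have hxγ2 : x ^ γ ≤ P * (1 + δ) := by
    rw [← hratio]; exact Real.rpow_le_rpow hxpos.le hx2 hγ0.le
  have heq : a t * x ^ γ / a (x * t) = x ^ γ / q := by
    rw [hqdef, div_div_eq_mul_div, mul_comm]
  rw [heq, abs_lt]
  clear_value q P δ r xi m i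
  constructor
  · have h3 : (1 - ε) * q < x ^ γ := by
      rcases le_or_gt (1 - ε) 0 with h | h
      · have h4 := mul_nonpos_of_nonpos_of_nonneg h hq.le
        linarith
      · calc (1 - ε) * q < (1 - ε) * ((1 + δ) * (P * (1 + δ))) :=
              mul_lt_mul_of_pos_left hq2 h
          _ ≤ P := by
              nlinarith [mul_nonneg hδ.le hP.le,
                mul_nonneg (mul_nonneg hδ.le hδ.le) hP.le,
                mul_nonneg (mul_nonneg (mul_nonneg hδ.le hδ.le) hδ.le) hP.le]
          _ ≤ x ^ γ := hxγ1
    have := (lt_div_iff₀ hq).mpr h3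
    linarith
  · have h3 : x ^ γ < (1 + ε) * q := by
      calc x ^ γ ≤ P * (1 + δ) := hxγ2
        _ ≤ (1 + ε) * ((1 - δ) * P) := by
            nlinarith [mul_nonneg (mul_nonneg hδ.le hP.le) (by linarith : (0:ℝ) ≤ 1 - 2 * δ)]
        _ < (1 + ε) * q := mul_lt_mul_of_pos_left hq1 (by linarith)
    have := (div_lt_iff₀ hq).mpr h3
    linarith


/-- Let `a : ℝ → ℝ` be continuous, strictly increasing on `[0,∞)`, regularly varying of
index `γ ∈ (0,1)`, with inverse `b = a⁻¹`. For fixed `0 < c < d` and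
`x_{k,n} := n / b(k)`, one has `k ∼ a(n)/x_{k,n}^γ` as `k, n → ∞` with `x_{k,n} ∈ [c,d]`. -/
theorem index_asymptotics_of_regvar
    (a b : ℝ → ℝ) (γ : ℝ) (hγ0 : 0 < γ) (hγ1 : γ < 1)
    (hcont : Continuous a) (hmono : StrictMonoOn a (Set.Ici 0))
    (hapos : ∀ x > 0, 0 < a x)
    (hbpos : ∀ y > 0, 0 < b y)
    (hba : ∀ x ≥ 0, b (a x) = x) (hab : ∀ y > 0, a (b y) = y)
    (hbtop : Tendsto b atTop atTop)
    (hRV : ∀ l > 0, Tendsto (fun t => a (l * t) / a t) atTop (𝓝 (l ^ γ)))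
    (c d : ℝ) (hc : 0 < c) (hcd : c < d) :
    ∀ ε > 0, ∃ N : ℕ, ∀ k n : ℕ, N ≤ k → N ≤ n →
      c ≤ (n : ℝ) / b k → (n : ℝ) / b k ≤ d →
      |(k : ℝ) / (a n / ((n : ℝ) / b k) ^ γ) - 1| < ε := by
  intro ε hε
  set ε' : ℝ := min ε 1 with hε'def
  have hε'0 : 0 < ε' := lt_min hε one_pos
  have hε'1 : ε' ≤ 1 := min_le_right _ _
  have hε'ε : ε' ≤ ε := min_le_left _ _
  obtain ⟨T, hT1, hT⟩ := key_unif a γ hγ0 hmono hapos hRV c d hc hcd ε' hε'0 hε'1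
  obtain ⟨M, hM⟩ := (hbtop.eventually_ge_atTop T).exists_forall_of_atTop
  refine ⟨max ⌈M⌉₊ 1, ?_⟩
  intro k n hk hn hcx hxd
  have hk1 : 1 ≤ k := le_trans (le_max_right _ _) hk
  have hn1 : 1 ≤ n := le_trans (le_max_right _ _) hn
  have hkM : M ≤ (k : ℝ) := le_trans (Nat.le_ceil M) (by exact_mod_cast le_trans (le_max_left _ _) hk)
  have hbk : T ≤ b k := hM _ hkM
  have hbk0 : 0 < b k := lt_of_lt_of_le (lt_of_lt_of_le one_pos hT1) hbk
  have hn0 : 0 < (n : ℝ) := by exact_mod_cast hn1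
  have hk0 : 0 < (k : ℝ) := by exact_mod_cast hk1
  have hxt : ((n : ℝ) / b k) * b k = (n : ℝ) := div_mul_cancel₀ _ hbk0.ne'
  have hak : a (b k) = (k : ℝ) := hab _ hk0
  have key := hT (b k) hbk ((n : ℝ) / b k) hcx hxd
  rw [hxt, hak] at key
  have heq : (k : ℝ) / (a n / ((n : ℝ) / b k) ^ γ) =
      (k : ℝ) * ((n : ℝ) / b k) ^ γ / a n := div_div_eq_mul_div _ _ _
  rw [heq]
  calc |(k : ℝ) * ((n : ℝ) / b k) ^ γ / a n - 1| < ε' := by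
        exact key
    _ ≤ ε := hε'ε
end

section
/- Let (Ω, μ, τ) be an ergodic probability preserving transformation and φ : Ω → 𝔾 measurable (𝔾 = ℤ or ℝ). Suppose φ = ξ − g + g∘τ + ψ where ξ ∈ 𝔾, g : Ω → 𝔾 measurable, and ψ : Ω → K for a closed subgroup K ≤ 𝔾. If ψ is aperiodic (for every nontrivial character χ of 𝔾 and every λ ∈ 𝕊¹, λ·χ(ψ) is not a multiplicative τ-coboundary), and if the closure of ℤξ + K equals 𝔾, then φ is non-arithmetic: for every nontrivial character χ of 𝔾, χ(φ) is not a multiplicative τ-coboundary. -/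
open MeasureTheory

noncomputable instance : MeasurableSpace Circle := borel Circle
instance : BorelSpace Circle := ⟨rfl⟩

/-- `h : Ω → 𝕊¹` is a multiplicative `τ`-coboundary (mod `μ`) if
`h = F/(F∘τ)` a.e. for some measurable `F : Ω → 𝕊¹`. -/
def IsMultCoboundary {Ω : Type*} [MeasurableSpace Ω] (μ : Measure Ω)
    (τ : Ω → Ω) (h : Ω → Circle) : Prop :=
  ∃ F : Ω → Circle, Measurable F ∧ ∀ᵐ ω ∂μ, h ω = F ω / F (τ ω)

theorem AddChar.map_sub_add_add_mul_div {G M : Type*} [AddCommGroup G] [CommGroup M]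
    (χ : AddChar G M) (ξ a b c : G) :
    χ (ξ - a + b + c) * (χ a / χ b) = χ ξ * χ c := by
  rw [← AddChar.map_sub_eq_div, ← AddChar.map_add_eq_mul, ← AddChar.map_add_eq_mul]
  congr 1
  abel

theorem IsMultCoboundary.mul_div_comp {Ω : Type*} [MeasurableSpace Ω] {μ : Measure Ω}
    {τ : Ω → Ω} {h : Ω → Circle} (hh : IsMultCoboundary μ τ h) {u : Ω → Circle}
    (hu : Measurable u) : IsMultCoboundary μ τ (fun ω => h ω * (u ω / u (τ ω))) := by
  obtain ⟨F, hF, hFh⟩ := hh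
  refine ⟨F * u, hF.mul hu, ?_⟩
  filter_upwards [hFh] with ω hω
  rw [hω, Pi.mul_apply, Pi.mul_apply, mul_div_mul_comm]

/-- Since `χ ∘ φ` and `χ ξ · χ ∘ ψ` differ by the coboundary of `χ ∘ g`, a coboundary
`χ ∘ φ` would make `χ ξ · χ ∘ ψ` one too. -/
theorem nonarithmetic_of_reduction_general
    {Ω : Type*} [MeasurableSpace Ω] (μ : Measure Ω)
    (τ : Ω → Ω)
    {G : Type*} [AddCommGroup G] [TopologicalSpace G]
    [MeasurableSpace G] [BorelSpace G]
    (φ ψ : Ω → G) (g : Ω → G) (ξ : G)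
    (hg : Measurable g)
    (hred : ∀ ω, φ ω = ξ - g ω + g (τ ω) + ψ ω)
    (haper : ∀ χ : AddChar G Circle, Continuous χ → χ ≠ 1 →
      ∀ lam : Circle, ¬ IsMultCoboundary μ τ (fun ω => lam * χ (ψ ω))) :
    ∀ χ : AddChar G Circle, Continuous χ → χ ≠ 1 →
      ¬ IsMultCoboundary μ τ (fun ω => χ (φ ω)) := by
  intro χ hχ hχ1 hcob
  apply haper χ hχ hχ1 (χ ξ)
  simpa only [hred, AddChar.map_sub_add_add_mul_div] using
    hcob.mul_div_comp (u := fun ω => χ (g ω)) (hχ.measurable.comp hg)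

/-- Cocycle reduction yields non-arithmeticity: if `φ = ξ − g + g∘τ + ψ` with
`ψ` taking values in a closed subgroup `K`, `ψ` aperiodic, and `closure(ℤξ + K) = G`,
then `φ` is non-arithmetic: for no nontrivial (continuous) character `χ` of `G` is
`χ(φ)` a multiplicative `τ`-coboundary. -/
theorem nonarithmetic_of_reduction
    {Ω : Type*} [MeasurableSpace Ω] (μ : Measure Ω) [IsProbabilityMeasure μ]
    (τ : Ω → Ω) (hτ : MeasurePreserving τ μ μ) (herg : Ergodic τ μ)
    {G : Type*} [AddCommGroup G] [TopologicalSpace G] [IsTopologicalAddGroup G]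
    [MeasurableSpace G] [BorelSpace G]
    (K : AddSubgroup G) (hK : IsClosed (K : Set G))
    (φ ψ : Ω → G) (g : Ω → G) (ξ : G)
    (hφ : Measurable φ) (hψ : Measurable ψ) (hg : Measurable g)
    (hψK : ∀ ω, ψ ω ∈ K)
    (hred : ∀ ω, φ ω = ξ - g ω + g (τ ω) + ψ ω)
    (hdense : Dense {x : G | ∃ n : ℤ, ∃ k ∈ K, x = n • ξ + k})
    (haper : ∀ χ : AddChar G Circle, Continuous χ → χ ≠ 1 →
      ∀ lam : Circle, ¬ IsMultCoboundary μ τ (fun ω => lam * χ (ψ ω))) :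
    ∀ χ : AddChar G Circle, Continuous χ → χ ≠ 1 →
      ¬ IsMultCoboundary μ τ (fun ω => χ (φ ω)) :=
  nonarithmetic_of_reduction_general μ τ φ ψ g ξ hg hred haper
end

section
/- (Kakutani skyscraper is measure preserving.) Let (Ω, μ, τ) be a probability preserving transformation and φ : Ω → ℕ measurable with φ ≥ 1. Define X := {(ω,n) ∈ Ω × ℕ : 1 ≤ n ≤ φ(ω)}, m := (μ × counting measure) restricted to X, and T(ω,n) := (ω, n+1) if n < φ(ω), T(ω,n) := (τω, 1) if n = φ(ω). Then T preserves m. -/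
/-!
Split the tower `X` into the floors strictly below the roof and the roof `{n = φ ω}`.
Below the roof `T` is the shift `(ω, n) ↦ (ω, n + 1)`, which carries `μ × count` on
`{1 ≤ n < φ ω}` onto `μ × count` on `{2 ≤ n ≤ φ ω}`. The roof is the graph of `φ`, on which
`μ × count` is the image of `μ` under `ω ↦ (ω, φ ω)`; `T` sends it to the image of `τ_* μ = μ`
under `ω ↦ (ω, 1)`, which is `μ × count` on the ground floor `{n = 1}`.
-/

open MeasureTheory

def skyscraperMap {Ω : Type*} (τ : Ω → Ω) (φ : Ω → ℕ) : Ω × ℕ → Ω × ℕ :=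
  fun p => if p.2 < φ p.1 then (p.1, p.2 + 1) else (τ p.1, 1)

open Measure Set

theorem Function.Injective.map_count_eq {α β : Type*} [MeasurableSpace α] [MeasurableSpace β]
    [MeasurableSingletonClass α] [MeasurableSingletonClass β] {f : α → β}
    (hf : f.Injective) (h2f : Measurable f) : count.map f = count.restrict (range f) := by
  ext s hs
  rw [map_apply h2f hs, restrict_apply hs, ← image_preimage_eq_inter_range,
    count_injective_image hf]

namespace MeasureTheory.Measure

theorem count_preimage_prodMk_inter_graph {α β : Type*} [MeasurableSpace β]
    [MeasurableSingletonClass β] {f : α → β} (s : Set (α × β)) (a : α) :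
    count (Prod.mk a ⁻¹' (s ∩ {p | p.2 = f p.1})) =
      ((fun a => (a, f a)) ⁻¹' s).indicator 1 a := by
  by_cases ha : (a, f a) ∈ s
  · have hfiber : Prod.mk a ⁻¹' (s ∩ {p | p.2 = f p.1}) = {f a} := by
      ext b
      constructor
      · rintro ⟨-, hb⟩
        exact hb
      · rintro rfl
        exact ⟨ha, rfl⟩
    simp [hfiber, ha]
  · have hfiber : Prod.mk a ⁻¹' (s ∩ {p | p.2 = f p.1}) = ∅ := by
      ext b
      simp only [mem_preimage, mem_inter_iff, mem_ofPred_eq, mem_empty_iff_false, iff_false,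
        not_and]
      rintro hb rfl
      exact ha hb
    simp [hfiber, ha]

variable {α β : Type*} [MeasurableSpace α] [MeasurableSpace β] [Countable β]
  [MeasurableSingletonClass β]

theorem prod_count_restrict_graph (μ : Measure α) {f : α → β} (hf : Measurable f) :
    (μ.prod count).restrict {p | p.2 = f p.1} = μ.map (fun a => (a, f a)) := by
  have hgraph : Measurable fun a => (a, f a) := measurable_id.prodMk hf
  have hG : MeasurableSet {p : α × β | p.2 = f p.1} :=
    measurableSet_eq_fun measurable_snd (hf.comp measurable_fst)
  ext s hs
  rw [restrict_apply hs, map_apply hgraph hs, prod_apply (hs.inter hG)]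
  simp_rw [count_preimage_prodMk_inter_graph]
  exact lintegral_indicator_one (hgraph hs)

theorem map_prodMap_id_count (μ : Measure α) [SFinite μ] {γ : Type*} [MeasurableSpace γ]
    [Countable γ] [MeasurableSingletonClass γ] {g : β → γ} (hg : g.Injective) :
    (μ.prod count).map (Prod.map id g) = (μ.prod count).restrict (univ ×ˢ range g) := by
  rw [← map_prod_map μ (count : Measure β) measurable_id (measurable_of_countable g), map_id,
    hg.map_count_eq (measurable_of_countable g), ← prod_restrict, restrict_univ]

end MeasureTheory.Measure

section Skyscraper

variable {Ω : Type*} {τ : Ω → Ω} {φ : Ω → ℕ}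

theorem skyscraperMap_of_lt {p : Ω × ℕ} (h : p.2 < φ p.1) :
    skyscraperMap τ φ p = (p.1, p.2 + 1) :=
  if_pos h

theorem skyscraperMap_roof (ω : Ω) : skyscraperMap τ φ (ω, φ ω) = (τ ω, 1) :=
  if_neg (lt_irrefl _)

variable [MeasurableSpace Ω]

theorem measurable_skyscraperMap (hτ : Measurable τ) (hφ : Measurable φ) :
    Measurable (skyscraperMap τ φ) :=
  Measurable.ite (measurableSet_lt measurable_snd (hφ.comp measurable_fst))
    (measurable_fst.prodMk (measurable_snd.add_const 1))
    ((hτ.comp measurable_fst).prodMk measurable_const)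

theorem map_skyscraperMap_restrict_below_roof (μ : Measure Ω) [SFinite μ] (hφ : Measurable φ) :
    ((μ.prod count).restrict {p | 1 ≤ p.2 ∧ p.2 < φ p.1}).map (skyscraperMap τ φ) =
      (μ.prod count).restrict {p | 2 ≤ p.2 ∧ p.2 ≤ φ p.1} := by
  have hshift : Measurable (Prod.map id Nat.succ : Ω × ℕ → Ω × ℕ) :=
    measurable_id.prodMap (measurable_of_countable _)
  have hbelow : MeasurableSet {p : Ω × ℕ | 1 ≤ p.2 ∧ p.2 < φ p.1} := by measurability
  have habove : MeasurableSet {p : Ω × ℕ | 2 ≤ p.2 ∧ p.2 ≤ φ p.1} := by measurability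
  have hpre : Prod.map id Nat.succ ⁻¹' {p : Ω × ℕ | 2 ≤ p.2 ∧ p.2 ≤ φ p.1} =
      {p | 1 ≤ p.2 ∧ p.2 < φ p.1} := by
    ext p
    simp only [mem_preimage, Prod.map_fst, Prod.map_snd, id, mem_ofPred_eq]
    omega
  have habove_sub : {p : Ω × ℕ | 2 ≤ p.2 ∧ p.2 ≤ φ p.1} ⊆ univ ×ˢ range Nat.succ :=
    fun p hp => ⟨trivial, p.2 - 1, by have := hp.1; omega⟩
  calc ((μ.prod count).restrict {p | 1 ≤ p.2 ∧ p.2 < φ p.1}).map (skyscraperMap τ φ)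
      = ((μ.prod count).restrict {p | 1 ≤ p.2 ∧ p.2 < φ p.1}).map (Prod.map id Nat.succ) :=
        map_congr (ae_restrict_of_forall_mem hbelow fun _ hp => skyscraperMap_of_lt hp.2)
    _ = ((μ.prod count).map (Prod.map id Nat.succ)).restrict
          {p | 2 ≤ p.2 ∧ p.2 ≤ φ p.1} := by
        rw [restrict_map hshift habove, hpre]
    _ = (μ.prod count).restrict {p | 2 ≤ p.2 ∧ p.2 ≤ φ p.1} := by
        rw [map_prodMap_id_count μ Nat.succ_injective, restrict_restrict habove,
          inter_eq_left.2 habove_sub]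

theorem map_skyscraperMap_restrict_roof (μ : Measure Ω) (hτ : MeasurePreserving τ μ μ)
    (hφ : Measurable φ) :
    ((μ.prod count).restrict {p | p.2 = φ p.1}).map (skyscraperMap τ φ) =
      (μ.prod count).restrict {p | p.2 = 1} := by
  have hroof : skyscraperMap τ φ ∘ (fun ω => (ω, φ ω)) = (fun ω => (ω, 1)) ∘ τ :=
    funext skyscraperMap_roof
  rw [prod_count_restrict_graph μ hφ,
    map_map (measurable_skyscraperMap hτ.measurable hφ) (measurable_id'.prodMk hφ), hroof,
    ← map_map measurable_prodMk_right hτ.measurable, hτ.map_eq]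
  exact (prod_count_restrict_graph μ (measurable_const (a := 1))).symm

end Skyscraper

/-- The Kakutani skyscraper over a probability preserving transformation `(Ω,μ,τ)`
with measurable height `φ ≥ 1` preserves the measure
`m = (μ × counting) restricted to X = {(ω,n) : 1 ≤ n ≤ φ(ω)}`. -/
theorem skyscraper_measurePreserving
    {Ω : Type*} [MeasurableSpace Ω] (μ : Measure Ω) [IsProbabilityMeasure μ]
    (τ : Ω → Ω) (hτ : MeasurePreserving τ μ μ)
    (φ : Ω → ℕ) (hφ : Measurable φ) (hφ1 : ∀ ω, 1 ≤ φ ω) :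
    MeasurePreserving (skyscraperMap τ φ)
      ((μ.prod (Measure.count : Measure ℕ)).restrict
        {p : Ω × ℕ | 1 ≤ p.2 ∧ p.2 ≤ φ p.1})
      ((μ.prod (Measure.count : Measure ℕ)).restrict
        {p : Ω × ℕ | 1 ≤ p.2 ∧ p.2 ≤ φ p.1}) := by
  have hroof : MeasurableSet {p : Ω × ℕ | p.2 = φ p.1} := by measurability
  have habove : MeasurableSet {p : Ω × ℕ | 2 ≤ p.2 ∧ p.2 ≤ φ p.1} := by measurability
  have hsplit_roof : {p : Ω × ℕ | 1 ≤ p.2 ∧ p.2 ≤ φ p.1} =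
      {p | 1 ≤ p.2 ∧ p.2 < φ p.1} ∪ {p | p.2 = φ p.1} := by
    ext p
    have := hφ1 p.1
    simp only [mem_ofPred_eq, mem_union]
    omega
  have hsplit_ground : {p : Ω × ℕ | 1 ≤ p.2 ∧ p.2 ≤ φ p.1} =
      {p | p.2 = 1} ∪ {p | 2 ≤ p.2 ∧ p.2 ≤ φ p.1} := by
    ext p
    have := hφ1 p.1
    simp only [mem_ofPred_eq, mem_union]
    omega
  have hdisj_roof : Disjoint {p : Ω × ℕ | 1 ≤ p.2 ∧ p.2 < φ p.1} {p | p.2 = φ p.1} :=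
    disjoint_left.2 fun p hp hq => by simp only [mem_ofPred_eq] at hp hq; omega
  have hdisj_ground : Disjoint {p : Ω × ℕ | p.2 = 1} {p | 2 ≤ p.2 ∧ p.2 ≤ φ p.1} :=
    disjoint_left.2 fun p hp hq => by simp only [mem_ofPred_eq] at hp hq; omega
  have hT := measurable_skyscraperMap hτ.measurable hφ
  set ν := μ.prod (count : Measure ℕ)
  refine ⟨hT, ?_⟩
  calc (ν.restrict {p | 1 ≤ p.2 ∧ p.2 ≤ φ p.1}).map (skyscraperMap τ φ)
      = (ν.restrict {p | 1 ≤ p.2 ∧ p.2 < φ p.1}).map (skyscraperMap τ φ) +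
          (ν.restrict {p | p.2 = φ p.1}).map (skyscraperMap τ φ) := by
        rw [hsplit_roof, restrict_union hdisj_roof hroof, Measure.map_add _ _ hT]
    _ = ν.restrict {p | 2 ≤ p.2 ∧ p.2 ≤ φ p.1} + ν.restrict {p | p.2 = 1} := by
        rw [map_skyscraperMap_restrict_below_roof μ hφ, map_skyscraperMap_restrict_roof μ hτ hφ]
    _ = ν.restrict {p | 1 ≤ p.2 ∧ p.2 ≤ φ p.1} := by
        rw [add_comm, ← restrict_union hdisj_ground habove, ← hsplit_ground]
end

section
/- (Tail asymptotics via the sandwich.) Let φ : Ω × [0,Δ] → ℕ, φ(x,y) = ⌈(𝔯(x) − y)/Δ⌉ where 𝔯 : Ω → ℝ₊ with 𝔯 ≥ Δ, and let m = μ × Leb on Ω × [0,Δ]. Suppose m([φ > t]) ∼ C/b(t) as t → ∞ where b is γ-regularly varying, γ ∈ (0,1). Then μ([𝔯 > t]) ∼ (C/Δ)·1/b(t/Δ) as t → ∞. -/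
open MeasureTheory Filter Topology

set_option maxHeartbeats 1000000 in
/-- Tail asymptotics via the sandwich: with `φ(x,y) = ⌈(𝔯(x) − y)/Δ⌉` on `Ω × [0,Δ]`,
`m = μ × Leb`, if `m([φ > t]) ∼ C/b(t)` as `t → ∞` for a `γ`-regularly varying `b`
(`γ ∈ (0,1)`), then `μ([𝔯 > t]) ∼ (C/Δ)·(1/b(t/Δ))` as `t → ∞`. -/
theorem tail_asymptotics_sandwich
    {Ω : Type*} [MeasurableSpace Ω] (μ : Measure Ω) [IsProbabilityMeasure μ]
    (r : Ω → ℝ) (hrmeas : Measurable r)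
    (Δ : ℝ) (hΔ : 0 < Δ) (hr : ∀ x, Δ ≤ r x)
    (γ : ℝ) (hγ0 : 0 < γ) (hγ1 : γ < 1)
    (b : ℝ → ℝ) (hbpos : ∀ t, 0 < t → 0 < b t)
    (hRV : ∀ l > 0, Tendsto (fun t => b (l * t) / b t) atTop (𝓝 (l ^ γ)))
    (C : ℝ) (hC : 0 < C)
    (htail : Tendsto
      (fun t : ℝ =>
        ((μ.prod (volume.restrict (Set.Icc (0 : ℝ) Δ)))
            {p : Ω × ℝ | t < (⌈(r p.1 - p.2) / Δ⌉₊ : ℝ)}).toReal * b t)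
      atTop (𝓝 C)) :
    Tendsto (fun t : ℝ => (μ {x | t < r x}).toReal * b (t / Δ)) atTop
      (𝓝 (C / Δ)) := by
  set m : Measure (Ω × ℝ) := μ.prod (volume.restrict (Set.Icc (0 : ℝ) Δ)) with hm
  set M : ℝ → ℝ := fun s => (m {p : Ω × ℝ | s < (⌈(r p.1 - p.2) / Δ⌉₊ : ℝ)}).toReal
    with hMdef
  haveI : IsFiniteMeasure (volume.restrict (Set.Icc (0 : ℝ) Δ)) :=
    ⟨by rw [Measure.restrict_apply_univ]; exact measure_Icc_lt_top⟩
  have hfin : ∀ S : Set (Ω × ℝ), m S ≠ ⊤ := fun S => measure_ne_top m S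
  have htail' : Tendsto (fun t : ℝ => M t * b t) atTop (𝓝 C) := htail
  -- key regular variation lemma
  have key : ∀ l : ℝ, 0 < l →
      Tendsto (fun u : ℝ => M (l * u) * b u) atTop (𝓝 (C * (l ^ γ)⁻¹)) := by
    intro l hl
    have hcomp : Tendsto (fun u : ℝ => l * u) atTop atTop :=
      Tendsto.const_mul_atTop hl tendsto_id
    have h1 : Tendsto (fun u : ℝ => M (l * u) * b (l * u)) atTop (𝓝 C) :=
      htail'.comp hcomp
    have h2 : Tendsto (fun u : ℝ => (b (l * u) / b u)⁻¹) atTop (𝓝 ((l ^ γ)⁻¹)) :=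
      (hRV l hl).inv₀ (ne_of_gt (Real.rpow_pos_of_pos hl γ))
    have h3 := h1.mul h2
    refine h3.congr' ?_
    filter_upwards [eventually_gt_atTop (0 : ℝ)] with u hu
    have hbu : b u ≠ 0 := ne_of_gt (hbpos u hu)
    have hblu : b (l * u) ≠ 0 := ne_of_gt (hbpos _ (mul_pos hl hu))
    rw [inv_div]
    field_simp
  -- a.e. the second coordinate is in [0, Δ]
  have hae : ∀ᵐ p : Ω × ℝ ∂m, p.2 ∈ Set.Icc (0 : ℝ) Δ := by
    rw [ae_iff]
    have hset : {p : Ω × ℝ | ¬ p.2 ∈ Set.Icc (0 : ℝ) Δ}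
        = (Set.univ : Set Ω) ×ˢ (Set.Icc (0 : ℝ) Δ)ᶜ := by
      ext p; simp [Set.mem_prod]
    rw [hset, hm, Measure.prod_prod, Measure.restrict_apply measurableSet_Icc.compl]
    simp
  -- sandwich inequalities
  have hineq1 : ∀ t : ℝ, M (t / Δ + 1) ≤ Δ * (μ {x | t < r x}).toReal := by
    intro t
    have hsub : m {p : Ω × ℝ | t / Δ + 1 < (⌈(r p.1 - p.2) / Δ⌉₊ : ℝ)}
        ≤ m ({x | t < r x} ×ˢ (Set.univ : Set ℝ)) := by
      apply measure_mono_ae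
      filter_upwards [hae] with p hp2 hp
      have hy0 : 0 ≤ p.2 := hp2.1
      have hyΔ : p.2 ≤ Δ := hp2.2
      have hz0 : 0 ≤ (r p.1 - p.2) / Δ := div_nonneg (by linarith [hr p.1]) hΔ.le
      have hceil : (⌈(r p.1 - p.2) / Δ⌉₊ : ℝ) < (r p.1 - p.2) / Δ + 1 :=
        Nat.ceil_lt_add_one hz0
      have hp' : t / Δ + 1 < (⌈(r p.1 - p.2) / Δ⌉₊ : ℝ) := hp
      have hlt : t / Δ < (r p.1 - p.2) / Δ := by linarith
      have hmul := mul_lt_mul_of_pos_right hlt hΔ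
      rw [div_mul_cancel₀ _ (ne_of_gt hΔ), div_mul_cancel₀ _ (ne_of_gt hΔ)] at hmul
      exact ⟨by simp only [Set.mem_setOf_eq]; linarith, Set.mem_univ _⟩
    have heq : m ({x | t < r x} ×ˢ (Set.univ : Set ℝ))
        = μ {x | t < r x} * ENNReal.ofReal Δ := by
      rw [hm, Measure.prod_prod, Measure.restrict_apply_univ, Real.volume_Icc, sub_zero]
    have hle := ENNReal.toReal_mono (hfin _) hsub
    rw [heq, ENNReal.toReal_mul, ENNReal.toReal_ofReal hΔ.le] at hle
    calc M (t / Δ + 1) ≤ (μ {x | t < r x}).toReal * Δ := hle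
    _ = Δ * (μ {x | t < r x}).toReal := mul_comm _ _
  have hineq2 : ∀ t : ℝ, Δ * (μ {x | t < r x}).toReal ≤ M (t / Δ - 1) := by
    intro t
    have hsub : ({x | t < r x} ×ˢ Set.Icc (0 : ℝ) Δ)
        ⊆ {p : Ω × ℝ | t / Δ - 1 < (⌈(r p.1 - p.2) / Δ⌉₊ : ℝ)} := by
      rintro ⟨x, y⟩ ⟨hx, hy⟩
      simp only [Set.mem_setOf_eq] at hx ⊢
      have hlt : t - Δ < r x - y := by have := hy.2; linarith
      have h1 : (t - Δ) / Δ < (r x - y) / Δ := by gcongr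
      have h2 : (t - Δ) / Δ = t / Δ - 1 := by field_simp
      have h3 : (r x - y) / Δ ≤ (⌈(r x - y) / Δ⌉₊ : ℝ) := Nat.le_ceil _
      linarith
    have heq : m ({x | t < r x} ×ˢ Set.Icc (0 : ℝ) Δ)
        = μ {x | t < r x} * ENNReal.ofReal Δ := by
      rw [hm, Measure.prod_prod, Measure.restrict_apply measurableSet_Icc,
        Set.inter_self, Real.volume_Icc, sub_zero]
    have hle := ENNReal.toReal_mono (hfin _) (measure_mono hsub)
    rw [heq, ENNReal.toReal_mul, ENNReal.toReal_ofReal hΔ.le] at hle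
    calc Δ * (μ {x | t < r x}).toReal = (μ {x | t < r x}).toReal * Δ := mul_comm _ _
    _ ≤ M (t / Δ - 1) := hle
  -- antitonicity of M
  have hMante : ∀ s₁ s₂ : ℝ, s₁ ≤ s₂ → M s₂ ≤ M s₁ := by
    intro s₁ s₂ h
    exact ENNReal.toReal_mono (hfin _)
      (measure_mono fun p hp => lt_of_le_of_lt h hp)
  -- final assembly
  rw [Metric.tendsto_nhds]
  intro ε hε
  set δ : ℝ := min (1 / 2) (Δ * ε / (4 * C)) with hδdef
  have hδ0 : 0 < δ := lt_min (by norm_num)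
    (div_pos (mul_pos hΔ hε) (by linarith))
  have hδhalf : δ ≤ 1 / 2 := min_le_left _ _
  have hδC : δ ≤ Δ * ε / (4 * C) := min_le_right _ _
  have hδC' : C * δ ≤ Δ * ε / 4 := by
    rw [le_div_iff₀ (by linarith : (0:ℝ) < 4 * C)] at hδC
    nlinarith
  -- bounds on the limits
  have h1δ : (0:ℝ) < 1 + δ := by linarith
  have h1δ' : (0:ℝ) < 1 - δ := by linarith
  have hlowlim : C - Δ * ε < C * ((1 + δ) ^ γ)⁻¹ := by
    have hb1 : (1 + δ) ^ γ ≤ (1 + δ) ^ (1:ℝ) :=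
      Real.rpow_le_rpow_of_exponent_le (by linarith) (by linarith)
    rw [Real.rpow_one] at hb1
    have hb2 : (1 + δ)⁻¹ ≤ ((1 + δ) ^ γ)⁻¹ := by
      apply inv_anti₀ (Real.rpow_pos_of_pos h1δ γ) hb1
    have hb3 : 1 - δ ≤ (1 + δ)⁻¹ := by
      rw [← one_div, le_div_iff₀ h1δ]
      nlinarith
    nlinarith [mul_le_mul_of_nonneg_left (hb3.trans hb2) hC.le]
  have hhighlim : C * ((1 - δ) ^ γ)⁻¹ < C + Δ * ε := by
    have hb1 : (1 - δ) ^ (1:ℝ) ≤ (1 - δ) ^ γ :=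
      Real.rpow_le_rpow_of_exponent_ge h1δ' (by linarith) (by linarith)
    rw [Real.rpow_one] at hb1
    have hb2 : ((1 - δ) ^ γ)⁻¹ ≤ (1 - δ)⁻¹ := inv_anti₀ h1δ' hb1
    have hb3 : (1 - δ)⁻¹ ≤ 1 + 2 * δ := by
      rw [← one_div, div_le_iff₀ h1δ']
      nlinarith
    nlinarith [mul_le_mul_of_nonneg_left (hb2.trans hb3) hC.le]
  -- compose key with t ↦ t/Δ
  have hdiv : Tendsto (fun t : ℝ => t / Δ) atTop atTop :=
    Tendsto.atTop_div_const hΔ tendsto_id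
  have hA : Tendsto (fun t : ℝ => M ((1 + δ) * (t / Δ)) * b (t / Δ)) atTop
      (𝓝 (C * ((1 + δ) ^ γ)⁻¹)) := (key (1 + δ) h1δ).comp hdiv
  have hB : Tendsto (fun t : ℝ => M ((1 - δ) * (t / Δ)) * b (t / Δ)) atTop
      (𝓝 (C * ((1 - δ) ^ γ)⁻¹)) := (key (1 - δ) h1δ').comp hdiv
  have hAgt : ∀ᶠ t : ℝ in atTop, C - Δ * ε < M ((1 + δ) * (t / Δ)) * b (t / Δ) :=
    hA.eventually (eventually_gt_nhds hlowlim)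
  have hBlt : ∀ᶠ t : ℝ in atTop, M ((1 - δ) * (t / Δ)) * b (t / Δ) < C + Δ * ε :=
    hB.eventually (eventually_lt_nhds hhighlim)
  filter_upwards [hAgt, hBlt, eventually_ge_atTop (Δ / δ), eventually_gt_atTop (0:ℝ)]
    with t h1 h2 h3 h4
  have hu : 0 < t / Δ := div_pos h4 hΔ
  have hbu : 0 < b (t / Δ) := hbpos _ hu
  have hδu : 1 ≤ δ * (t / Δ) := by
    rw [div_le_iff₀ hδ0] at h3
    rw [mul_comm, div_mul_eq_mul_div, le_div_iff₀ hΔ]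
    linarith
  have e1 : t / Δ + 1 ≤ (1 + δ) * (t / Δ) := by nlinarith
  have e2 : (1 - δ) * (t / Δ) ≤ t / Δ - 1 := by nlinarith
  have hlow : C - Δ * ε < Δ * (μ {x | t < r x}).toReal * b (t / Δ) := by
    have := mul_le_mul_of_nonneg_right
      ((hMante _ _ e1).trans (hineq1 t)) hbu.le
    linarith
  have hhigh : Δ * (μ {x | t < r x}).toReal * b (t / Δ) < C + Δ * ε := by
    have := mul_le_mul_of_nonneg_right
      ((hineq2 t).trans (hMante _ _ e2)) hbu.le
    linarith
  rw [Real.dist_eq, abs_lt]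
  have hCd : C / Δ * Δ = C := div_mul_cancel₀ _ (ne_of_gt hΔ)
  constructor <;> nlinarith
end
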